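/- Consider a finite-horizon MDP with finite state space S, finite action space A, horizon T ≥ 1, fixed initial state s₀ ∈ S, transition probabilities P : S × A × S → ℝ with P(s'|s,a) ≥ 0 and Σ_{s'} P(s'|s,a) = 1, a safe set S_safe ⊆ S, and a parameterized policy π : ℝ^d × S × A → ℝ such that π_θ(a|s) > 0, Σ_a π_θ(a|s) = 1, and θ ↦ π_θ(a|s) is differentiable for every (s,a). For a trajectory τ = (s₀, a₀, s₁, …, a_{T−1}, s_T) define p_θ(τ) = ∏_{t=0}^{T−1} π_θ(a_t|s_t)·P(s_{t+1}|s_t,a_t), and let F(θ) = Σ_τ p_θ(τ)·∏_{t=0}^{T} 1(s_t ∈ S_safe). Define the safety-to-go functions U_t^θ : S → ℝ by the downward recursion U_T^θ(s) = 1(s ∈ S_safe) and, for 0 ≤ t < T, U_t^θ(s) = 1(s ∈ S_safe)·Σ_a π_θ(a|s)·Σ_{s'} P(s'|s,a)·U_{t+1}^θ(s'), and set Q_t^θ(s,a) = Σ_{s'} P(s'|s,a)·U_{t+1}^θ(s'). If s₀ ∈ S_safe, then ∇_θ F(θ) = Σ_τ p_θ(τ) · Σ_{t=0}^{T−1} (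 ∏_{u=0}^{t} 1(s_u ∈ S_safe) ) · Q_t^θ(s_t, a_t) · ∇_θ log π_θ(a_t|s_t). -/

import Mathlib

open Finset


def actF {A : Type*} {T : ℕ} (hT : 1 ≤ T) (g : Fin T → A) (u : ℕ) : A :=
  if h : u < T then g ⟨u, h⟩ else g ⟨0, hT⟩

lemma actF_lt {A : Type*} {T : ℕ} (hT : 1 ≤ T) (g : Fin T → A) {u : ℕ} (h : u < T) :
    actF hT g u = g ⟨u, h⟩ := dif_pos h

lemma actF_update {A : Type*} {T : ℕ} (hT : 1 ≤ T) (g : Fin T → A) (i : Fin T) (a : A)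
    {u : ℕ} (hu : u < T) :
    actF hT (Function.update g i a) u = if u = (i : ℕ) then a else actF hT g u := by
  rw [actF_lt hT _ hu, Function.update_apply]
  by_cases h : u = (i : ℕ)
  · simp [Fin.ext_iff, h]
  · rw [if_neg (by simp [Fin.ext_iff, h]), if_neg h, actF_lt hT g hu]

lemma pi_sum_avg {ι X E : Type*} [Fintype ι] [DecidableEq ι] [Fintype X] [Nonempty X]
    [AddCommMonoid E] [Module ℝ E] (i : ι) (F : (ι → X) → E) :
    ∑ g : ι → X, F g
      = ∑ g : ι → X, (Fintype.card X : ℝ)⁻¹ • ∑ x : X, F (Function.update g i x) := by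
  classical
  have key : ∀ (y : X) (h : { j // j ≠ i } → X) (x : X),
      Function.update ((Equiv.funSplitAt i X).symm (y, h)) i x
        = (Equiv.funSplitAt i X).symm (x, h) := by
    intro y h x; funext j
    rcases eq_or_ne j i with rfl | hj
    · simp [Equiv.funSplitAt_symm_apply]
    · simp [Function.update_apply, hj, Equiv.funSplitAt_symm_apply]
  rw [← Equiv.sum_comp (Equiv.funSplitAt i X).symm F,
      ← Equiv.sum_comp (Equiv.funSplitAt i X).symm
        (fun g => (Fintype.card X : ℝ)⁻¹ • ∑ x : X, F (Function.update g i x)),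
      Fintype.sum_prod_type, Fintype.sum_prod_type]
  have lhs_eq : (∑ y : X, ∑ h : {j // j ≠ i} → X, F ((Equiv.funSplitAt i X).symm (y, h)))
      = ∑ h : {j // j ≠ i} → X, ∑ x : X, F ((Equiv.funSplitAt i X).symm (x, h)) :=
    Finset.sum_comm
  have rhs_eq : (∑ y : X, ∑ h : {j // j ≠ i} → X, (Fintype.card X : ℝ)⁻¹ •
        ∑ x : X, F (Function.update ((Equiv.funSplitAt i X).symm (y, h)) i x))
      = ∑ h : {j // j ≠ i} → X, ∑ x : X, F ((Equiv.funSplitAt i X).symm (x, h)) := by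
    rw [Finset.sum_comm]
    refine Finset.sum_congr rfl fun h _ => ?_
    have : ∀ y : X, (Fintype.card X : ℝ)⁻¹ •
        ∑ x : X, F (Function.update ((Equiv.funSplitAt i X).symm (y, h)) i x)
        = (Fintype.card X : ℝ)⁻¹ • ∑ x : X, F ((Equiv.funSplitAt i X).symm (x, h)) := by
      intro y
      congr 1
      exact Finset.sum_congr rfl fun x _ => congrArg F (key y h x)
    rw [Finset.sum_congr rfl fun y _ => this y, Finset.sum_const, card_univ,
        ← Nat.cast_smul_eq_nsmul ℝ, smul_smul,
        mul_inv_cancel₀ (by exact_mod_cast Fintype.card_ne_zero), one_smul]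
  exact lhs_eq.trans rhs_eq.symm

lemma avg_snd {A S E : Type*} [Fintype A] [Fintype S] [Nonempty S] {T : ℕ}
    [AddCommMonoid E] [Module ℝ E] (i : Fin T) (M : ((Fin T → A) × (Fin T → S)) → E) :
    ∑ τ : (Fin T → A) × (Fin T → S), M τ
      = ∑ τ : (Fin T → A) × (Fin T → S),
          (Fintype.card S : ℝ)⁻¹ • ∑ x : S, M (τ.1, Function.update τ.2 i x) := by
  rw [Fintype.sum_prod_type, Fintype.sum_prod_type]
  exact Finset.sum_congr rfl fun a _ => pi_sum_avg i (fun g => M (a, g))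

lemma avg_fst {A S E : Type*} [Fintype A] [Fintype S] [Nonempty A] {T : ℕ}
    [AddCommMonoid E] [Module ℝ E] (i : Fin T) (M : ((Fin T → A) × (Fin T → S)) → E) :
    ∑ τ : (Fin T → A) × (Fin T → S), M τ
      = ∑ τ : (Fin T → A) × (Fin T → S),
          (Fintype.card A : ℝ)⁻¹ • ∑ a : A, M (Function.update τ.1 i a, τ.2) := by
  rw [Fintype.sum_prod_type_right, Fintype.sum_prod_type_right]
  exact Finset.sum_congr rfl fun s _ => pi_sum_avg i (fun g => M (g, s))

lemma key_step {S A : Type*} [Fintype S] [Fintype A] [DecidableEq S] [DecidableEq A]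
    {V : Type*} [AddCommMonoid V] [Module ℝ V]
    (T : ℕ) (hT : 1 ≤ T) (s0 : S)
    (P : S → A → S → ℝ) (hPsum : ∀ s a, ∑ s', P s a s' = 1)
    (Ssafe : Set S) [DecidablePred (· ∈ Ssafe)]
    (pi : S → A → ℝ) (hsum : ∀ s, ∑ a, pi s a = 1)
    (st : (Fin T → S) → ℕ → S)
    (hst0 : ∀ traj, st traj 0 = s0)
    (hstS : ∀ traj (t : Fin T), st traj ((t : ℕ) + 1) = traj t)
    (U : ℕ → S → ℝ)
    (hUT : ∀ s, U T s = (if s ∈ Ssafe then (1 : ℝ) else 0))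
    (hUrec : ∀ (t : ℕ), t < T → ∀ s, U t s =
      (if s ∈ Ssafe then (1 : ℝ) else 0) * ∑ a, pi s a * ∑ s', P s a s' * U (t + 1) s')
    (Q : ℕ → S → A → ℝ)
    (hQ : ∀ t s a, Q t s a = ∑ s', P s a s' * U (t + 1) s')
    (L : S → A → V)
    (t : ℕ) (ht : t < T) :
    ∑ τ : (Fin T → A) × (Fin T → S),
      ((∏ u ∈ Finset.range T,
          pi (st τ.2 u) (actF hT τ.1 u) * P (st τ.2 u) (actF hT τ.1 u) (st τ.2 (u+1))) *
        ∏ u ∈ Finset.range (T+1), (if st τ.2 u ∈ Ssafe then (1:ℝ) else 0)) •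
        L (st τ.2 t) (actF hT τ.1 t)
    = ∑ τ : (Fin T → A) × (Fin T → S),
      ((∏ u ∈ Finset.range T,
          pi (st τ.2 u) (actF hT τ.1 u) * P (st τ.2 u) (actF hT τ.1 u) (st τ.2 (u+1))) *
        (∏ u ∈ Finset.range (t+1), (if st τ.2 u ∈ Ssafe then (1:ℝ) else 0)) *
        Q t (st τ.2 t) (actF hT τ.1 t)) •
        L (st τ.2 t) (actF hT τ.1 t) := by
  classical
  haveI hSne : Nonempty S := ⟨s0⟩
  haveI hAne : Nonempty A := by
    by_contra h
    rw [not_nonempty_iff] at h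
    have := hsum s0
    rw [Finset.univ_eq_empty, Finset.sum_empty] at this
    exact one_ne_zero this.symm
  have st_upd : ∀ (g : Fin T → S) (i : Fin T) (x : S) (u : ℕ), u ≤ T →
      st (Function.update g i x) u = if u = (i : ℕ) + 1 then x else st g u := by
    intro g i x u hu
    match u with
    | 0 => simp [hst0]
    | (j+1) =>
      have hj : j < T := by omega
      have e1 := hstS (Function.update g i x) ⟨j, hj⟩
      have e2 := hstS g ⟨j, hj⟩
      simp only [Fin.val_mk] at e1 e2
      rw [e1]
      by_cases hji : j = (i : ℕ)
      · rw [if_pos (by omega), Function.update_apply,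
            if_pos (by simp [Fin.ext_iff, hji])]
      · rw [if_neg (by omega), Function.update_apply,
            if_neg (by simp [Fin.ext_iff, hji])]
        exact e2.symm
  -- abbreviations
  set stp : ((Fin T → A) × (Fin T → S)) → ℕ → ℝ := fun τ u =>
    pi (st τ.2 u) (actF hT τ.1 u) * P (st τ.2 u) (actF hT τ.1 u) (st τ.2 (u+1)) with hstp
  set ind : ((Fin T → A) × (Fin T → S)) → ℕ → ℝ := fun τ u =>
    if st τ.2 u ∈ Ssafe then (1:ℝ) else 0 with hind
  set Lg : ((Fin T → A) × (Fin T → S)) → V := fun τ => L (st τ.2 t) (actF hT τ.1 t) with hLg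
  set FL : ℕ → ((Fin T → A) × (Fin T → S)) → V := fun m τ =>
    ((∏ u ∈ Finset.range m, stp τ u) * (∏ u ∈ Finset.range m, ind τ u) * U m (st τ.2 m)) • Lg τ
    with hFL
  set FR : ℕ → ((Fin T → A) × (Fin T → S)) → V := fun m τ =>
    ((∏ u ∈ Finset.range m, stp τ u) * (∏ u ∈ Finset.range (t+1), ind τ u) *
      Q t (st τ.2 t) (actF hT τ.1 t)) • Lg τ with hFR
  -- step lemma for FL
  have stepL : ∀ m, t + 1 ≤ m → m < T →
      (∑ τ : (Fin T → A) × (Fin T → S), FL (m+1) τ)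
        = ((Fintype.card A : ℝ) * (Fintype.card S : ℝ))⁻¹ •
            ∑ τ : (Fin T → A) × (Fin T → S), FL m τ := by
    intro m hm1 hm2
    rw [avg_snd ⟨m, hm2⟩ (FL (m+1)),
        avg_fst (⟨m, hm2⟩ : Fin T)
          (fun τ => (Fintype.card S : ℝ)⁻¹ •
            ∑ x : S, FL (m+1) (τ.1, Function.update τ.2 ⟨m, hm2⟩ x)),
        Finset.smul_sum]
    refine Finset.sum_congr rfl fun τ _ => ?_
    have hA2 : ∀ x : S, st (Function.update τ.2 ⟨m, hm2⟩ x) (m+1) = x := by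
      intro x; rw [st_upd _ _ _ _ (by omega)]; simp
    have hA1 : ∀ (x : S) (u : ℕ), u ≤ T → u ≠ m + 1 →
        st (Function.update τ.2 ⟨m, hm2⟩ x) u = st τ.2 u := by
      intro x u h1 h2; rw [st_upd _ _ _ _ h1]; simp [h2]
    have hA4 : ∀ a : A, actF hT (Function.update τ.1 ⟨m, hm2⟩ a) m = a := by
      intro a; rw [actF_update hT _ _ _ hm2]; simp
    have hA3 : ∀ (a : A) (u : ℕ), u < T → u ≠ m →
        actF hT (Function.update τ.1 ⟨m, hm2⟩ a) u = actF hT τ.1 u := by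
      intro a u h1 h2; rw [actF_update hT _ _ _ h1]; simp [h2]
    have hpoint : ∀ (a : A) (x : S),
        FL (m+1) (Function.update τ.1 ⟨m, hm2⟩ a, Function.update τ.2 ⟨m, hm2⟩ x)
          = (((∏ u ∈ Finset.range m, stp τ u) * (∏ u ∈ Finset.range m, ind τ u) * ind τ m) *
              (pi (st τ.2 m) a * (P (st τ.2 m) a x * U (m+1) x))) • Lg τ := by
      intro a x
      simp only [hFL, hstp, hind, hLg]
      rw [Finset.prod_range_succ, Finset.prod_range_succ]
      have e1 : (∏ u ∈ Finset.range m,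
          pi (st (Function.update τ.2 ⟨m, hm2⟩ x) u)
              (actF hT (Function.update τ.1 ⟨m, hm2⟩ a) u) *
            P (st (Function.update τ.2 ⟨m, hm2⟩ x) u)
              (actF hT (Function.update τ.1 ⟨m, hm2⟩ a) u)
              (st (Function.update τ.2 ⟨m, hm2⟩ x) (u+1)))
          = ∏ u ∈ Finset.range m,
              pi (st τ.2 u) (actF hT τ.1 u) * P (st τ.2 u) (actF hT τ.1 u) (st τ.2 (u+1)) := by
        refine Finset.prod_congr rfl fun u hu => ?_
        have hu' : u < m := Finset.mem_range.mp hu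
        rw [hA1 x u (by omega) (by omega), hA1 x (u+1) (by omega) (by omega),
            hA3 a u (by omega) (by omega)]
      have e2 : (∏ u ∈ Finset.range m,
            if st (Function.update τ.2 ⟨m, hm2⟩ x) u ∈ Ssafe then (1:ℝ) else 0)
          = ∏ u ∈ Finset.range m, if st τ.2 u ∈ Ssafe then (1:ℝ) else 0 := by
        refine Finset.prod_congr rfl fun u hu => ?_
        have hu' : u < m := Finset.mem_range.mp hu
        rw [hA1 x u (by omega) (by omega)]
      rw [e1, e2, hA2, hA4, hA1 x m (by omega) (by omega), hA1 x t (by omega) (by omega),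
          hA3 a t (by omega) (by omega)]
      congr 1
      ring
    have hsx : ∀ a : A,
        (∑ x : S, FL (m+1) (Function.update τ.1 ⟨m, hm2⟩ a, Function.update τ.2 ⟨m, hm2⟩ x))
          = (((∏ u ∈ Finset.range m, stp τ u) * (∏ u ∈ Finset.range m, ind τ u) * ind τ m) *
              (pi (st τ.2 m) a * ∑ x : S, P (st τ.2 m) a x * U (m+1) x)) • Lg τ := by
      intro a
      simp only [hpoint]
      rw [← Finset.sum_smul]
      congr 1
      rw [← Finset.mul_sum, ← Finset.mul_sum]
    calc (Fintype.card A : ℝ)⁻¹ • ∑ a : A, (Fintype.card S : ℝ)⁻¹ •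
            ∑ x : S, FL (m+1) (Function.update τ.1 ⟨m, hm2⟩ a, Function.update τ.2 ⟨m, hm2⟩ x)
        = (Fintype.card A : ℝ)⁻¹ • (Fintype.card S : ℝ)⁻¹ •
            ∑ a : A, (((∏ u ∈ Finset.range m, stp τ u) * (∏ u ∈ Finset.range m, ind τ u) *
              ind τ m) * (pi (st τ.2 m) a * ∑ x : S, P (st τ.2 m) a x * U (m+1) x)) • Lg τ := by
          rw [← Finset.smul_sum]
          congr 1
          congr 1
          exact Finset.sum_congr rfl fun a _ => hsx a
      _ = ((Fintype.card A : ℝ) * (Fintype.card S : ℝ))⁻¹ • FL m τ := by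
          rw [← Finset.sum_smul, ← Finset.mul_sum]
          simp only [hFL]
          rw [smul_smul, smul_smul, smul_smul]
          congr 1
          rw [hUrec m hm2 (st τ.2 m)]
          simp only [hind]
          rw [mul_inv]
          ring
  -- step lemma for FR
  have stepR : ∀ m, t + 1 ≤ m → m < T →
      (∑ τ : (Fin T → A) × (Fin T → S), FR (m+1) τ)
        = ((Fintype.card A : ℝ) * (Fintype.card S : ℝ))⁻¹ •
            ∑ τ : (Fin T → A) × (Fin T → S), FR m τ := by
    intro m hm1 hm2
    rw [avg_snd ⟨m, hm2⟩ (FR (m+1)),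
        avg_fst (⟨m, hm2⟩ : Fin T)
          (fun τ => (Fintype.card S : ℝ)⁻¹ •
            ∑ x : S, FR (m+1) (τ.1, Function.update τ.2 ⟨m, hm2⟩ x)),
        Finset.smul_sum]
    refine Finset.sum_congr rfl fun τ _ => ?_
    have hA2 : ∀ x : S, st (Function.update τ.2 ⟨m, hm2⟩ x) (m+1) = x := by
      intro x; rw [st_upd _ _ _ _ (by omega)]; simp
    have hA1 : ∀ (x : S) (u : ℕ), u ≤ T → u ≠ m + 1 →
        st (Function.update τ.2 ⟨m, hm2⟩ x) u = st τ.2 u := by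
      intro x u h1 h2; rw [st_upd _ _ _ _ h1]; simp [h2]
    have hA4 : ∀ a : A, actF hT (Function.update τ.1 ⟨m, hm2⟩ a) m = a := by
      intro a; rw [actF_update hT _ _ _ hm2]; simp
    have hA3 : ∀ (a : A) (u : ℕ), u < T → u ≠ m →
        actF hT (Function.update τ.1 ⟨m, hm2⟩ a) u = actF hT τ.1 u := by
      intro a u h1 h2; rw [actF_update hT _ _ _ h1]; simp [h2]
    have hpoint : ∀ (a : A) (x : S),
        FR (m+1) (Function.update τ.1 ⟨m, hm2⟩ a, Function.update τ.2 ⟨m, hm2⟩ x)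
          = (((∏ u ∈ Finset.range m, stp τ u) * (∏ u ∈ Finset.range (t+1), ind τ u) *
              Q t (st τ.2 t) (actF hT τ.1 t)) *
              (pi (st τ.2 m) a * P (st τ.2 m) a x)) • Lg τ := by
      intro a x
      simp only [hFR, hstp, hind, hLg]
      rw [Finset.prod_range_succ]
      have e1 : (∏ u ∈ Finset.range m,
          pi (st (Function.update τ.2 ⟨m, hm2⟩ x) u)
              (actF hT (Function.update τ.1 ⟨m, hm2⟩ a) u) *
            P (st (Function.update τ.2 ⟨m, hm2⟩ x) u)
              (actF hT (Function.update τ.1 ⟨m, hm2⟩ a) u)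
              (st (Function.update τ.2 ⟨m, hm2⟩ x) (u+1)))
          = ∏ u ∈ Finset.range m,
              pi (st τ.2 u) (actF hT τ.1 u) * P (st τ.2 u) (actF hT τ.1 u) (st τ.2 (u+1)) := by
        refine Finset.prod_congr rfl fun u hu => ?_
        have hu' : u < m := Finset.mem_range.mp hu
        rw [hA1 x u (by omega) (by omega), hA1 x (u+1) (by omega) (by omega),
            hA3 a u (by omega) (by omega)]
      have e2 : (∏ u ∈ Finset.range (t+1),
            if st (Function.update τ.2 ⟨m, hm2⟩ x) u ∈ Ssafe then (1:ℝ) else 0)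
          = ∏ u ∈ Finset.range (t+1), if st τ.2 u ∈ Ssafe then (1:ℝ) else 0 := by
        refine Finset.prod_congr rfl fun u hu => ?_
        have hu' : u < t + 1 := Finset.mem_range.mp hu
        rw [hA1 x u (by omega) (by omega)]
      rw [e1, e2, hA2, hA4, hA1 x m (by omega) (by omega), hA1 x t (by omega) (by omega),
          hA3 a t (by omega) (by omega)]
      congr 1
      ring
    have hsx : ∀ a : A,
        (∑ x : S, FR (m+1) (Function.update τ.1 ⟨m, hm2⟩ a, Function.update τ.2 ⟨m, hm2⟩ x))
          = (((∏ u ∈ Finset.range m, stp τ u) * (∏ u ∈ Finset.range (t+1), ind τ u) *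
              Q t (st τ.2 t) (actF hT τ.1 t)) * pi (st τ.2 m) a) • Lg τ := by
      intro a
      simp only [hpoint]
      rw [← Finset.sum_smul]
      congr 1
      rw [← Finset.mul_sum, ← Finset.mul_sum, hPsum, mul_one]
    calc (Fintype.card A : ℝ)⁻¹ • ∑ a : A, (Fintype.card S : ℝ)⁻¹ •
            ∑ x : S, FR (m+1) (Function.update τ.1 ⟨m, hm2⟩ a, Function.update τ.2 ⟨m, hm2⟩ x)
        = (Fintype.card A : ℝ)⁻¹ • (Fintype.card S : ℝ)⁻¹ •
            ∑ a : A, (((∏ u ∈ Finset.range m, stp τ u) * (∏ u ∈ Finset.range (t+1), ind τ u) *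
              Q t (st τ.2 t) (actF hT τ.1 t)) * pi (st τ.2 m) a) • Lg τ := by
          rw [← Finset.smul_sum]
          congr 1
          congr 1
          exact Finset.sum_congr rfl fun a _ => hsx a
      _ = ((Fintype.card A : ℝ) * (Fintype.card S : ℝ))⁻¹ • FR m τ := by
          rw [← Finset.sum_smul, ← Finset.mul_sum, hsum, mul_one]
          simp only [hFR]
          rw [smul_smul, smul_smul, smul_smul]
          congr 1
          rw [mul_inv]
          try ring
  -- base case
  have base : (∑ τ : (Fin T → A) × (Fin T → S), FL (t+1) τ)
      = ∑ τ : (Fin T → A) × (Fin T → S), FR (t+1) τ := by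
    rw [avg_snd ⟨t, ht⟩ (FL (t+1)), avg_snd ⟨t, ht⟩ (FR (t+1))]
    refine Finset.sum_congr rfl fun τ _ => ?_
    congr 1
    have hA2 : ∀ x : S, st (Function.update τ.2 ⟨t, ht⟩ x) (t+1) = x := by
      intro x; rw [st_upd _ _ _ _ (by omega)]; simp
    have hA1 : ∀ (x : S) (u : ℕ), u ≤ T → u ≠ t + 1 →
        st (Function.update τ.2 ⟨t, ht⟩ x) u = st τ.2 u := by
      intro x u h1 h2; rw [st_upd _ _ _ _ h1]; simp [h2]
    have hpL : ∀ x : S,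
        FL (t+1) (τ.1, Function.update τ.2 ⟨t, ht⟩ x)
          = (((∏ u ∈ Finset.range t, stp τ u) * pi (st τ.2 t) (actF hT τ.1 t) *
              (∏ u ∈ Finset.range (t+1), ind τ u)) *
              (P (st τ.2 t) (actF hT τ.1 t) x * U (t+1) x)) • Lg τ := by
      intro x
      simp only [hFL, hstp, hind, hLg]
      rw [Finset.prod_range_succ]
      have e1 : (∏ u ∈ Finset.range t,
          pi (st (Function.update τ.2 ⟨t, ht⟩ x) u) (actF hT τ.1 u) *
            P (st (Function.update τ.2 ⟨t, ht⟩ x) u) (actF hT τ.1 u)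
              (st (Function.update τ.2 ⟨t, ht⟩ x) (u+1)))
          = ∏ u ∈ Finset.range t,
              pi (st τ.2 u) (actF hT τ.1 u) * P (st τ.2 u) (actF hT τ.1 u) (st τ.2 (u+1)) := by
        refine Finset.prod_congr rfl fun u hu => ?_
        have hu' : u < t := Finset.mem_range.mp hu
        rw [hA1 x u (by omega) (by omega), hA1 x (u+1) (by omega) (by omega)]
      have e2 : (∏ u ∈ Finset.range (t+1),
            if st (Function.update τ.2 ⟨t, ht⟩ x) u ∈ Ssafe then (1:ℝ) else 0)
          = ∏ u ∈ Finset.range (t+1), if st τ.2 u ∈ Ssafe then (1:ℝ) else 0 := by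
        refine Finset.prod_congr rfl fun u hu => ?_
        have hu' : u < t + 1 := Finset.mem_range.mp hu
        rw [hA1 x u (by omega) (by omega)]
      rw [e1, e2, hA2, hA1 x t (by omega) (by omega)]
      congr 1
      ring
    have hpR : ∀ x : S,
        FR (t+1) (τ.1, Function.update τ.2 ⟨t, ht⟩ x)
          = (((∏ u ∈ Finset.range t, stp τ u) * pi (st τ.2 t) (actF hT τ.1 t) *
              (∏ u ∈ Finset.range (t+1), ind τ u) * Q t (st τ.2 t) (actF hT τ.1 t)) *
              P (st τ.2 t) (actF hT τ.1 t) x) • Lg τ := by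
      intro x
      simp only [hFR, hstp, hind, hLg]
      rw [Finset.prod_range_succ]
      have e1 : (∏ u ∈ Finset.range t,
          pi (st (Function.update τ.2 ⟨t, ht⟩ x) u) (actF hT τ.1 u) *
            P (st (Function.update τ.2 ⟨t, ht⟩ x) u) (actF hT τ.1 u)
              (st (Function.update τ.2 ⟨t, ht⟩ x) (u+1)))
          = ∏ u ∈ Finset.range t,
              pi (st τ.2 u) (actF hT τ.1 u) * P (st τ.2 u) (actF hT τ.1 u) (st τ.2 (u+1)) := by
        refine Finset.prod_congr rfl fun u hu => ?_
        have hu' : u < t := Finset.mem_range.mp hu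
        rw [hA1 x u (by omega) (by omega), hA1 x (u+1) (by omega) (by omega)]
      have e2 : (∏ u ∈ Finset.range (t+1),
            if st (Function.update τ.2 ⟨t, ht⟩ x) u ∈ Ssafe then (1:ℝ) else 0)
          = ∏ u ∈ Finset.range (t+1), if st τ.2 u ∈ Ssafe then (1:ℝ) else 0 := by
        refine Finset.prod_congr rfl fun u hu => ?_
        have hu' : u < t + 1 := Finset.mem_range.mp hu
        rw [hA1 x u (by omega) (by omega)]
      rw [e1, e2, hA2, hA1 x t (by omega) (by omega)]
      congr 1
      ring
    simp only [hpL, hpR]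
    rw [← Finset.sum_smul, ← Finset.sum_smul, ← Finset.mul_sum, ← Finset.mul_sum, hPsum,
        mul_one, ← hQ t (st τ.2 t) (actF hT τ.1 t)]
  -- induction
  have main : ∀ k, t + 1 + k ≤ T →
      (∑ τ : (Fin T → A) × (Fin T → S), FL (t+1+k) τ)
        = ∑ τ : (Fin T → A) × (Fin T → S), FR (t+1+k) τ := by
    intro k
    induction k with
    | zero => intro _; simpa using base
    | succ k ih =>
      intro hk
      have h2 : t + 1 + k < T := by omega
      have e : t + 1 + (k+1) = (t+1+k) + 1 := by omega
      rw [e, stepL _ (by omega) h2, stepR _ (by omega) h2, ih (by omega)]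
  have hmain := main (T - (t+1)) (by omega)
  rw [show t + 1 + (T - (t+1)) = T by omega] at hmain
  calc ∑ τ : (Fin T → A) × (Fin T → S),
        ((∏ u ∈ Finset.range T,
            pi (st τ.2 u) (actF hT τ.1 u) * P (st τ.2 u) (actF hT τ.1 u) (st τ.2 (u+1))) *
          ∏ u ∈ Finset.range (T+1), (if st τ.2 u ∈ Ssafe then (1:ℝ) else 0)) •
          L (st τ.2 t) (actF hT τ.1 t)
      = ∑ τ : (Fin T → A) × (Fin T → S), FL T τ := by
        refine Finset.sum_congr rfl fun τ _ => ?_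
        simp only [hFL, hstp, hind, hLg]
        rw [Finset.prod_range_succ (fun u => if st τ.2 u ∈ Ssafe then (1:ℝ) else 0) T, hUT]
        congr 1
        ring
    _ = ∑ τ : (Fin T → A) × (Fin T → S), FR T τ := hmain
    _ = _ := by
        refine Finset.sum_congr rfl fun τ _ => ?_
        simp only [hFR, hstp, hind, hLg]




/-- SPG-Actor-Critic, Corollary 2: with safety-to-go functions
`U t s` defined by the downward recursion `U T s = 1(s ∈ Ssafe)`,
`U t s = 1(s ∈ Ssafe) · ∑_a pol θ s a · ∑_{s'} P s a s' · U (t+1) s'`, and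
`Q t s a = ∑_{s'} P s a s' · U (t+1) s'`, if `s0 ∈ Ssafe` then
`∇F(θ) = ∑_τ pTraj θ τ · ∑_{t=0}^{T-1} (∏_{u=0}^{t} 1(s_u ∈ Ssafe)) ·
Q t (s_t) (a_t) · ∇log pol θ (s_t) (a_t)`. -/
theorem stmt_6 {d : ℕ} {S A : Type*} [Fintype S] [Fintype A] [DecidableEq S] [DecidableEq A]
    (T : ℕ) (hT : 1 ≤ T) (s0 : S)
    (P : S → A → S → ℝ) (hPnn : ∀ s a s', 0 ≤ P s a s')
    (hPsum : ∀ s a, ∑ s', P s a s' = 1)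
    (Ssafe : Set S) [DecidablePred (· ∈ Ssafe)]
    (pol : EuclideanSpace ℝ (Fin d) → S → A → ℝ)
    (hpos : ∀ θ s a, 0 < pol θ s a)
    (hsum : ∀ θ s, ∑ a, pol θ s a = 1)
    (hdiff : ∀ s a, Differentiable ℝ (fun θ => pol θ s a))
    (st : (Fin T → S) → ℕ → S)
    (hst0 : ∀ traj, st traj 0 = s0)
    (hstS : ∀ traj (t : Fin T), st traj ((t : ℕ) + 1) = traj t)
    (pTraj : EuclideanSpace ℝ (Fin d) → ((Fin T → A) × (Fin T → S)) → ℝ)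
    (hpTraj : ∀ θ τ, pTraj θ τ =
      ∏ t : Fin T, pol θ (st τ.2 (t : ℕ)) (τ.1 t) *
        P (st τ.2 (t : ℕ)) (τ.1 t) (st τ.2 ((t : ℕ) + 1)))
    (F : EuclideanSpace ℝ (Fin d) → ℝ)
    (hF : ∀ θ, F θ = ∑ τ : (Fin T → A) × (Fin T → S),
      pTraj θ τ * ∏ t ∈ Finset.range (T + 1), (if st τ.2 t ∈ Ssafe then (1 : ℝ) else 0))
    -- safety-to-go functions
    (U : EuclideanSpace ℝ (Fin d) → ℕ → S → ℝ)
    (hUT : ∀ θ s, U θ T s = (if s ∈ Ssafe then (1 : ℝ) else 0))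
    (hUrec : ∀ θ (t : ℕ), t < T → ∀ s, U θ t s =
      (if s ∈ Ssafe then (1 : ℝ) else 0) *
        ∑ a, pol θ s a * ∑ s', P s a s' * U θ (t + 1) s')
    (Q : EuclideanSpace ℝ (Fin d) → ℕ → S → A → ℝ)
    (hQ : ∀ θ t s a, Q θ t s a = ∑ s', P s a s' * U θ (t + 1) s')
    (hs0 : s0 ∈ Ssafe) :
    ∀ θ, fderiv ℝ F θ = ∑ τ : (Fin T → A) × (Fin T → S),
      ∑ t : Fin T,
        (pTraj θ τ *
          (∏ u ∈ Finset.range ((t : ℕ) + 1), (if st τ.2 u ∈ Ssafe then (1 : ℝ) else 0)) *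
          Q θ (t : ℕ) (st τ.2 (t : ℕ)) (τ.1 t)) •
        fderiv ℝ (fun θ' => Real.log (pol θ' (st τ.2 (t : ℕ)) (τ.1 t))) θ := by
  intro θ
  classical
  have hDpol : ∀ (s : S) (a : A), HasFDerivAt (fun θ' => pol θ' s a)
      (fderiv ℝ (fun θ' => pol θ' s a) θ) θ := fun s a => (hdiff s a θ).hasFDerivAt
  have hlog : ∀ (s : S) (a : A), fderiv ℝ (fun θ' => Real.log (pol θ' s a)) θ
      = (pol θ s a)⁻¹ • fderiv ℝ (fun θ' => pol θ' s a) θ := fun s a =>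
    ((hDpol s a).log (ne_of_gt (hpos θ s a))).fderiv
  set Dt : ((Fin T → A) × (Fin T → S)) → (EuclideanSpace ℝ (Fin d) →L[ℝ] ℝ) := fun τ =>
    ∑ i : Fin T, (∏ j ∈ Finset.univ.erase i,
        (pol θ (st τ.2 (j : ℕ)) (τ.1 j) * P (st τ.2 (j : ℕ)) (τ.1 j) (st τ.2 ((j : ℕ) + 1)))) •
      ((P (st τ.2 (i : ℕ)) (τ.1 i) (st τ.2 ((i : ℕ) + 1))) •
        fderiv ℝ (fun θ' => pol θ' (st τ.2 (i : ℕ)) (τ.1 i)) θ) with hDt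
  have hptau : ∀ τ : (Fin T → A) × (Fin T → S),
      HasFDerivAt (fun θ' => pTraj θ' τ) (Dt τ) θ := by
    intro τ
    have hfun : (fun θ' => pTraj θ' τ)
        = fun θ' => ∏ i : Fin T, pol θ' (st τ.2 (i : ℕ)) (τ.1 i) *
            P (st τ.2 (i : ℕ)) (τ.1 i) (st τ.2 ((i : ℕ) + 1)) := funext fun θ' => hpTraj θ' τ
    rw [hfun, hDt]
    exact HasFDerivAt.finset_prod fun i _ => (hDpol _ _).mul_const _
  have hFeq : F = fun θ' => ∑ τ : (Fin T → A) × (Fin T → S),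
      pTraj θ' τ * ∏ u ∈ Finset.range (T + 1), (if st τ.2 u ∈ Ssafe then (1 : ℝ) else 0) :=
    funext hF
  have hsum' : HasFDerivAt (fun θ' => ∑ τ : (Fin T → A) × (Fin T → S),
      pTraj θ' τ * ∏ u ∈ Finset.range (T + 1), (if st τ.2 u ∈ Ssafe then (1 : ℝ) else 0))
      (∑ τ : (Fin T → A) × (Fin T → S),
        (∏ u ∈ Finset.range (T + 1), (if st τ.2 u ∈ Ssafe then (1 : ℝ) else 0)) • Dt τ) θ :=
    HasFDerivAt.fun_sum fun τ _ => (hptau τ).mul_const _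
  have hfderiv : fderiv ℝ F θ = ∑ τ : (Fin T → A) × (Fin T → S),
      (∏ u ∈ Finset.range (T + 1), (if st τ.2 u ∈ Ssafe then (1 : ℝ) else 0)) • Dt τ := by
    rw [hFeq]
    exact hsum'.fderiv
  have hact : ∀ (g : Fin T → A) (i : Fin T), actF hT g (i : ℕ) = g i := by
    intro g i
    rw [actF_lt hT g i.isLt]
  have hprod : ∀ τ : (Fin T → A) × (Fin T → S), pTraj θ τ = ∏ u ∈ Finset.range T,
      pol θ (st τ.2 u) (actF hT τ.1 u) * P (st τ.2 u) (actF hT τ.1 u) (st τ.2 (u + 1)) := by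
    intro τ
    rw [hpTraj, ← Fin.prod_univ_eq_prod_range (fun u =>
      pol θ (st τ.2 u) (actF hT τ.1 u) * P (st τ.2 u) (actF hT τ.1 u) (st τ.2 (u + 1))) T]
    exact Finset.prod_congr rfl fun j _ => by rw [hact]
  have step2 : (∑ τ : (Fin T → A) × (Fin T → S),
        (∏ u ∈ Finset.range (T + 1), (if st τ.2 u ∈ Ssafe then (1 : ℝ) else 0)) • Dt τ)
      = ∑ τ : (Fin T → A) × (Fin T → S), ∑ i : Fin T,
          ((pTraj θ τ * ∏ u ∈ Finset.range (T + 1), (if st τ.2 u ∈ Ssafe then (1 : ℝ) else 0)) •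
            fderiv ℝ (fun θ' => Real.log (pol θ' (st τ.2 (i : ℕ)) (τ.1 i))) θ) := by
    refine Finset.sum_congr rfl fun τ _ => ?_
    rw [hDt, Finset.smul_sum]
    refine Finset.sum_congr rfl fun i _ => ?_
    rw [hlog, smul_smul, smul_smul, smul_smul]
    congr 1
    have hp : pTraj θ τ = (pol θ (st τ.2 (i : ℕ)) (τ.1 i) *
        P (st τ.2 (i : ℕ)) (τ.1 i) (st τ.2 ((i : ℕ) + 1))) *
        ∏ j ∈ Finset.univ.erase i,
          (pol θ (st τ.2 (j : ℕ)) (τ.1 j) * P (st τ.2 (j : ℕ)) (τ.1 j) (st τ.2 ((j : ℕ) + 1))) := by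
      rw [hpTraj]
      exact (Finset.mul_prod_erase Finset.univ _ (Finset.mem_univ i)).symm
    rw [hp]
    have h0 : pol θ (st τ.2 (i : ℕ)) (τ.1 i) ≠ 0 := ne_of_gt (hpos θ _ _)
    field_simp
  have hkey : ∀ i : Fin T,
      (∑ τ : (Fin T → A) × (Fin T → S),
        ((pTraj θ τ * ∏ u ∈ Finset.range (T + 1), (if st τ.2 u ∈ Ssafe then (1 : ℝ) else 0)) •
          fderiv ℝ (fun θ' => Real.log (pol θ' (st τ.2 (i : ℕ)) (τ.1 i))) θ))
      = ∑ τ : (Fin T → A) × (Fin T → S),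
          (pTraj θ τ *
            (∏ u ∈ Finset.range ((i : ℕ) + 1), (if st τ.2 u ∈ Ssafe then (1 : ℝ) else 0)) *
            Q θ (i : ℕ) (st τ.2 (i : ℕ)) (τ.1 i)) •
          fderiv ℝ (fun θ' => Real.log (pol θ' (st τ.2 (i : ℕ)) (τ.1 i))) θ := by
    intro i
    have h2 := key_step T hT s0 P hPsum Ssafe (pol θ) (hsum θ) st hst0 hstS (U θ) (hUT θ)
      (hUrec θ) (Q θ) (hQ θ)
      (fun s a => fderiv ℝ (fun θ' => Real.log (pol θ' s a)) θ) (i : ℕ) i.isLt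
    have h1 : (∑ τ : (Fin T → A) × (Fin T → S),
        ((pTraj θ τ * ∏ u ∈ Finset.range (T + 1), (if st τ.2 u ∈ Ssafe then (1 : ℝ) else 0)) •
          fderiv ℝ (fun θ' => Real.log (pol θ' (st τ.2 (i : ℕ)) (τ.1 i))) θ))
        = ∑ τ : (Fin T → A) × (Fin T → S),
          ((∏ u ∈ Finset.range T,
              pol θ (st τ.2 u) (actF hT τ.1 u) *
                P (st τ.2 u) (actF hT τ.1 u) (st τ.2 (u + 1))) *
            ∏ u ∈ Finset.range (T + 1), (if st τ.2 u ∈ Ssafe then (1 : ℝ) else 0)) •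
            (fun s a => fderiv ℝ (fun θ' => Real.log (pol θ' s a)) θ)
              (st τ.2 (i : ℕ)) (actF hT τ.1 (i : ℕ)) := by
      refine Finset.sum_congr rfl fun τ _ => ?_
      rw [hact, hprod]
    have h3 : (∑ τ : (Fin T → A) × (Fin T → S),
        ((∏ u ∈ Finset.range T,
            pol θ (st τ.2 u) (actF hT τ.1 u) *
              P (st τ.2 u) (actF hT τ.1 u) (st τ.2 (u + 1))) *
          (∏ u ∈ Finset.range ((i : ℕ) + 1), (if st τ.2 u ∈ Ssafe then (1 : ℝ) else 0)) *
          Q θ (i : ℕ) (st τ.2 (i : ℕ)) (actF hT τ.1 (i : ℕ))) •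
          (fun s a => fderiv ℝ (fun θ' => Real.log (pol θ' s a)) θ)
            (st τ.2 (i : ℕ)) (actF hT τ.1 (i : ℕ)))
        = ∑ τ : (Fin T → A) × (Fin T → S),
          (pTraj θ τ *
            (∏ u ∈ Finset.range ((i : ℕ) + 1), (if st τ.2 u ∈ Ssafe then (1 : ℝ) else 0)) *
            Q θ (i : ℕ) (st τ.2 (i : ℕ)) (τ.1 i)) •
          fderiv ℝ (fun θ' => Real.log (pol θ' (st τ.2 (i : ℕ)) (τ.1 i))) θ := by
      refine Finset.sum_congr rfl fun τ _ => ?_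
      rw [hact, hprod]
    exact h1.trans (h2.trans h3)
  calc fderiv ℝ F θ
      = ∑ τ : (Fin T → A) × (Fin T → S),
          (∏ u ∈ Finset.range (T + 1), (if st τ.2 u ∈ Ssafe then (1 : ℝ) else 0)) • Dt τ :=
        hfderiv
    _ = ∑ τ : (Fin T → A) × (Fin T → S), ∑ i : Fin T,
          ((pTraj θ τ * ∏ u ∈ Finset.range (T + 1), (if st τ.2 u ∈ Ssafe then (1 : ℝ) else 0)) •
            fderiv ℝ (fun θ' => Real.log (pol θ' (st τ.2 (i : ℕ)) (τ.1 i))) θ) := step2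
    _ = ∑ i : Fin T, ∑ τ : (Fin T → A) × (Fin T → S),
          ((pTraj θ τ * ∏ u ∈ Finset.range (T + 1), (if st τ.2 u ∈ Ssafe then (1 : ℝ) else 0)) •
            fderiv ℝ (fun θ' => Real.log (pol θ' (st τ.2 (i : ℕ)) (τ.1 i))) θ) :=
        Finset.sum_comm
    _ = ∑ i : Fin T, ∑ τ : (Fin T → A) × (Fin T → S),
          (pTraj θ τ *
            (∏ u ∈ Finset.range ((i : ℕ) + 1), (if st τ.2 u ∈ Ssafe then (1 : ℝ) else 0)) *
            Q θ (i : ℕ) (st τ.2 (i : ℕ)) (τ.1 i)) •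
          fderiv ℝ (fun θ' => Real.log (pol θ' (st τ.2 (i : ℕ)) (τ.1 i))) θ :=
        Finset.sum_congr rfl fun i _ => hkey i
    _ = _ := Finset.sum_comm
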